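/- The function u(x,t) = 1/(1 + k·exp((x - (5/√6)t)/√6))² with k > 0 satisfies the Fisher-Kolmogorov equation ∂u/∂t = ∂²u/∂x² + u(1-u) for all real x and t. -/

import Mathlib

theorem ablowitz_zeppetella_solves_fisher (k : ℝ) (hk : 0 < k) (u : ℝ → ℝ → ℝ)
    (hu : ∀ x t, u x t =
      1 / (1 + k * Real.exp ((x - (5 / Real.sqrt 6) * t) / Real.sqrt 6)) ^ 2) :
    ∀ x t : ℝ,
      deriv (fun t' => u x t') t =
        deriv (deriv (fun x' => u x' t)) x + u x t * (1 - u x t) := by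
  intro x t
  set s := Real.sqrt 6 with hs_def
  have hs0 : (0:ℝ) < s := Real.sqrt_pos.mpr (by norm_num)
  have hsne : s ≠ 0 := ne_of_gt hs0
  have hss : s * s = 6 := Real.mul_self_sqrt (by norm_num)
  set g : ℝ → ℝ := fun y => 1 / (1 + k * Real.exp (y / s)) ^ 2 with hg_def
  set g1 : ℝ → ℝ := fun y => -2 * (k * Real.exp (y / s)) / (s * (1 + k * Real.exp (y / s)) ^ 3) with hg1_def
  set g2 : ℝ → ℝ := fun y => 6 * (k * Real.exp (y / s)) ^ 2 / (s ^ 2 * (1 + k * Real.exp (y / s)) ^ 4)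
      - 2 * (k * Real.exp (y / s)) / (s ^ 2 * (1 + k * Real.exp (y / s)) ^ 3) with hg2_def
  have hDpos : ∀ y : ℝ, 0 < 1 + k * Real.exp (y / s) := fun y => by positivity
  have hDne : ∀ y : ℝ, (1 + k * Real.exp (y / s)) ≠ 0 := fun y => (hDpos y).ne'
  have hE : ∀ y : ℝ, HasDerivAt (fun y : ℝ => 1 + k * Real.exp (y / s))
      (k * (Real.exp (y / s) * (1 / s))) y := by
    intro y
    have h1 : HasDerivAt (fun y : ℝ => y / s) (1 / s) y := by
      simpa using (hasDerivAt_id y).div_const s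
    exact (((Real.hasDerivAt_exp (y / s)).comp y h1).const_mul k).const_add 1
  have hg' : ∀ y : ℝ, HasDerivAt g (g1 y) y := by
    intro y
    have h2 : HasDerivAt (fun y => ((1 + k * Real.exp (y / s)) ^ 2)⁻¹) _ y := ((hE y).pow 2).inv (pow_ne_zero 2 (hDne y))
    have h3 : HasDerivAt g
        (-(2 * (1 + k * Real.exp (y / s)) ^ 1 * (k * (Real.exp (y / s) * (1 / s)))) /
          ((1 + k * Real.exp (y / s)) ^ 2) ^ 2) y := by
      simpa [hg_def, one_div] using h2
    convert h3 using 1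
    simp only [hg1_def]
    field_simp
  have hg1' : ∀ y : ℝ, HasDerivAt g1 (g2 y) y := by
    intro y
    have hnum : HasDerivAt (fun y : ℝ => -2 * (k * Real.exp (y / s)))
        (-2 * (k * (Real.exp (y / s) * (1 / s)))) y := by
      have h1 : HasDerivAt (fun y : ℝ => y / s) (1 / s) y := by
        simpa using (hasDerivAt_id y).div_const s
      exact (((Real.hasDerivAt_exp (y / s)).comp y h1).const_mul k).const_mul (-2)
    have hden : HasDerivAt (fun y : ℝ => s * (1 + k * Real.exp (y / s)) ^ 3)
        (s * (3 * (1 + k * Real.exp (y / s)) ^ 2 * (k * (Real.exp (y / s) * (1 / s))))) y := by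
      exact ((hE y).pow 3).const_mul s
    have hdne : s * (1 + k * Real.exp (y / s)) ^ 3 ≠ 0 :=
      mul_ne_zero hsne (pow_ne_zero 3 (hDne y))
    have h4 : HasDerivAt g1 _ y := hnum.div hden hdne
    convert h4 using 1
    simp only [hg2_def]
    field_simp
    ring
  -- x-derivatives
  have hux : (fun x' => u x' t) = fun x' => g (x' - (5 / s) * t) := funext fun x' => hu x' t
  have hshift : ∀ x' : ℝ, HasDerivAt (fun x' : ℝ => x' - (5 / s) * t) 1 x' := fun x' => by
    simpa using (hasDerivAt_id x').sub_const ((5 / s) * t)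
  have hd1 : deriv (fun x' => u x' t) = fun x' => g1 (x' - (5 / s) * t) := by
    rw [hux]
    funext x'
    simpa [Function.comp_def] using ((hg' (x' - (5 / s) * t)).comp x' (hshift x')).deriv
  have hd2 : deriv (deriv (fun x' => u x' t)) x = g2 (x - (5 / s) * t) := by
    rw [hd1]
    simpa [Function.comp_def] using ((hg1' (x - (5 / s) * t)).comp x (hshift x)).deriv
  -- t-derivative
  have hut : (fun t' => u x t') = fun t' => g (x - (5 / s) * t') := funext fun t' => hu x t'
  have htshift : HasDerivAt (fun t' : ℝ => x - (5 / s) * t') (-(5 / s)) t := by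
    simpa using ((hasDerivAt_id t).const_mul (5 / s)).const_sub x
  have hdt : deriv (fun t' => u x t') t = g1 (x - (5 / s) * t) * (-(5 / s)) := by
    rw [hut]
    exact ((hg' (x - (5 / s) * t)).comp t htshift).deriv
  rw [hdt, hd2, hu x t]
  have hs2 : s ^ 2 = 6 := by rw [sq]; exact hss
  have key : ∀ e : ℝ, 0 < e →
      -2 * e / (s * (1 + e) ^ 3) * -(5 / s) =
        (6 * e ^ 2 / (s ^ 2 * (1 + e) ^ 4) - 2 * e / (s ^ 2 * (1 + e) ^ 3)) +
          1 / (1 + e) ^ 2 * (1 - 1 / (1 + e) ^ 2) := by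
    intro e he
    have h1 : (1 : ℝ) + e ≠ 0 := by positivity
    rw [show -2 * e / (s * (1 + e) ^ 3) * -(5 / s) = 10 * e / (s ^ 2 * (1 + e) ^ 3) from by
      rw [sq]; field_simp; ring]
    rw [hs2]
    field_simp
    ring
  simpa only [hg1_def, hg2_def, hg_def] using key (k * Real.exp ((x - 5 / s * t) / s)) (by positivity)
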